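/- Let q be a prime power, d a positive integer, and m, n positive integers. Let Φ = (φ₁, ..., φ_n) : 𝔽_q^m → 𝔽_q^n be a polynomial map where each φ_i ∈ 𝔽_q[x₁, ..., x_m] has total degree at most d. Suppose there exists μ ∈ 𝔽_q[x₁, ..., x_m] with Σ_{a ∈ Φ⁻¹(0)} μ(a) ≠ 0. Then there exists a polynomial P ∈ 𝔽_q[x₁, ..., x_n] of total degree at most (q−1)(n − m/d) + deg(μ)/d such that P(0) ≠ 0 and supp(P) ⊆ im(Φ). -/

import Mathlib

open MvPolynomial Finset

namespace CLP7

variable {R : Type*} [CommRing R] {m n : ℕ}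

/-- Weighted degree-bound predicate: every monomial `α` of `T` (in the outer `n`
variables, each of weight `d`) together with the total degree of its coefficient
(a polynomial in `m` variables) is at most `D`. -/
def DB {K : Type} [Field K] (d : ℕ) (T : MvPolynomial (Fin n) (MvPolynomial (Fin m) K)) (D : ℕ) : Prop :=
  ∀ α : (Fin n) →₀ ℕ, MvPolynomial.coeff α T ≠ 0 →
    (MvPolynomial.coeff α T).totalDegree + d * (α.sum fun _ e => e) ≤ D

variable {K : Type} [Field K] {d : ℕ}

lemma degsum_add (β γ : (Fin n) →₀ ℕ) :
    ((β + γ).sum fun _ e => e) = (β.sum fun _ e => e) + (γ.sum fun _ e => e) :=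
  Finsupp.sum_add_index' (fun _ => rfl) (fun _ _ _ => rfl)

lemma db_mono {T : MvPolynomial (Fin n) (MvPolynomial (Fin m) K)} {D D' : ℕ}
    (h : DB d T D) (hD : D ≤ D') : DB d T D' := fun α hα => (h α hα).trans hD

lemma db_C (c : MvPolynomial (Fin m) K) : DB (n := n) d (C c) c.totalDegree := by
  intro α hα
  rw [coeff_C] at hα ⊢
  split at hα
  · next h =>
    subst h
    simp
  · exact absurd rfl hα

lemma db_one : DB (n := n) (m := m) (K := K) d 1 0 := by
  have := db_C (n := n) (d := d) (1 : MvPolynomial (Fin m) K)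
  simpa using this

lemma db_X (i : Fin n) : DB (m := m) (K := K) d (X i) d := by
  intro α hα
  rw [coeff_X'] at hα ⊢
  split at hα
  · next h =>
    subst h
    simp [Finsupp.sum_single_index]
  · exact absurd rfl hα

lemma db_add {T₁ T₂ : MvPolynomial (Fin n) (MvPolynomial (Fin m) K)} {D : ℕ}
    (h₁ : DB d T₁ D) (h₂ : DB d T₂ D) : DB d (T₁ + T₂) D := by
  intro α hα
  rw [coeff_add] at hα ⊢
  by_cases c1 : MvPolynomial.coeff α T₁ = 0
  · rw [c1, zero_add] at hα ⊢; exact h₂ α hα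
  by_cases c2 : MvPolynomial.coeff α T₂ = 0
  · rw [c2, add_zero] at hα ⊢; exact h₁ α hα
  · have hb := totalDegree_add (MvPolynomial.coeff α T₁) (MvPolynomial.coeff α T₂)
    have b1 := h₁ α c1
    have b2 := h₂ α c2
    omega

lemma db_neg {T : MvPolynomial (Fin n) (MvPolynomial (Fin m) K)} {D : ℕ}
    (h : DB d T D) : DB d (-T) D := by
  intro α hα
  rw [coeff_neg] at hα ⊢
  rw [totalDegree_neg]
  exact h α (fun hc => hα (by rw [hc, neg_zero]))

lemma db_sub {T₁ T₂ : MvPolynomial (Fin n) (MvPolynomial (Fin m) K)} {D : ℕ}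
    (h₁ : DB d T₁ D) (h₂ : DB d T₂ D) : DB d (T₁ - T₂) D := by
  rw [sub_eq_add_neg]; exact db_add h₁ (db_neg h₂)

lemma db_mul {T₁ T₂ : MvPolynomial (Fin n) (MvPolynomial (Fin m) K)} {D₁ D₂ : ℕ}
    (h₁ : DB d T₁ D₁) (h₂ : DB d T₂ D₂) : DB d (T₁ * T₂) (D₁ + D₂) := by
  intro α hα
  rw [coeff_mul] at hα ⊢
  classical
  set s := (Finset.HasAntidiagonal.antidiagonal α).filter
    (fun p => MvPolynomial.coeff p.1 T₁ * MvPolynomial.coeff p.2 T₂ ≠ 0) with hs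
  have hsum : ∑ p ∈ Finset.HasAntidiagonal.antidiagonal α, MvPolynomial.coeff p.1 T₁ * MvPolynomial.coeff p.2 T₂
      = ∑ p ∈ s, MvPolynomial.coeff p.1 T₁ * MvPolynomial.coeff p.2 T₂ :=
    (Finset.sum_filter_ne_zero _).symm
  rw [hsum] at hα ⊢
  have hne : s.Nonempty := Finset.nonempty_of_sum_ne_zero hα
  have hterm : ∀ p ∈ s,
      (MvPolynomial.coeff p.1 T₁ * MvPolynomial.coeff p.2 T₂).totalDegree
        ≤ (D₁ + D₂) - d * (α.sum fun _ e => e) := by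
    intro p hp
    rw [hs, Finset.mem_filter] at hp
    obtain ⟨hpa, hpne⟩ := hp
    have hadd : p.1 + p.2 = α := Finset.HasAntidiagonal.mem_antidiagonal.1 hpa
    have c1 : MvPolynomial.coeff p.1 T₁ ≠ 0 := fun h => hpne (by rw [h, zero_mul])
    have c2 : MvPolynomial.coeff p.2 T₂ ≠ 0 := fun h => hpne (by rw [h, mul_zero])
    have b1 := h₁ p.1 c1
    have b2 := h₂ p.2 c2
    have hdm := totalDegree_mul (MvPolynomial.coeff p.1 T₁) (MvPolynomial.coeff p.2 T₂)
    have hσ : (α.sum fun _ e => e) = (p.1.sum fun _ e => e) + (p.2.sum fun _ e => e) := by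
      rw [← hadd, degsum_add]
    have hmul : d * (α.sum fun _ e => e)
        = d * (p.1.sum fun _ e => e) + d * (p.2.sum fun _ e => e) := by
      rw [hσ, mul_add]
    omega
  have hdeg := (totalDegree_finset_sum s _).trans (Finset.sup_le hterm)
  obtain ⟨p, hp⟩ := hne
  have hlow : d * (α.sum fun _ e => e) ≤ D₁ + D₂ := by
    rw [hs, Finset.mem_filter] at hp
    obtain ⟨hpa, hpne⟩ := hp
    have hadd : p.1 + p.2 = α := Finset.HasAntidiagonal.mem_antidiagonal.1 hpa
    have c1 : MvPolynomial.coeff p.1 T₁ ≠ 0 := fun h => hpne (by rw [h, zero_mul])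
    have c2 : MvPolynomial.coeff p.2 T₂ ≠ 0 := fun h => hpne (by rw [h, mul_zero])
    have b1 := h₁ p.1 c1
    have b2 := h₂ p.2 c2
    have hσ : (α.sum fun _ e => e) = (p.1.sum fun _ e => e) + (p.2.sum fun _ e => e) := by
      rw [← hadd, degsum_add]
    have hmul : d * (α.sum fun _ e => e)
        = d * (p.1.sum fun _ e => e) + d * (p.2.sum fun _ e => e) := by
      rw [hσ, mul_add]
    omega
  omega

lemma db_pow {T : MvPolynomial (Fin n) (MvPolynomial (Fin m) K)} {D : ℕ}
    (h : DB d T D) : ∀ k : ℕ, DB d (T ^ k) (k * D)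
  | 0 => by rw [pow_zero, Nat.zero_mul]; exact db_one
  | (k+1) => by
      rw [pow_succ, Nat.add_mul, Nat.one_mul]
      exact db_mul (db_pow h k) h

lemma db_prod {ι : Type*} (s : Finset ι)
    (F : ι → MvPolynomial (Fin n) (MvPolynomial (Fin m) K)) (D : ℕ)
    (h : ∀ i ∈ s, DB d (F i) D) : DB d (∏ i ∈ s, F i) (s.card * D) := by
  classical
  induction s using Finset.induction_on with
  | empty => simpa using db_one
  | @insert a t hx ih =>
      rw [Finset.prod_insert hx, Finset.card_insert_of_notMem hx, Nat.add_mul, Nat.one_mul, Nat.add_comm]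
      exact db_mul (h a (Finset.mem_insert_self a t))
        (ih (fun i hi => h i (Finset.mem_insert_of_mem hi)))

end CLP7

/-- Key construction for the Croot–Lev–Pach method: let `K` be the field with `q`
elements, and `Φ = (φ₁, …, φ_n) : K^m → K^n` a polynomial map with each `φ i` of
total degree at most `d`. If there is `μ ∈ K[x₁, …, x_m]` with
`∑_{a ∈ Φ⁻¹(0)} μ(a) ≠ 0`, then there exists `P ∈ K[x₁, …, x_n]` of total degree at
most `(q-1)(n - m/d) + deg(μ)/d` with `P(0) ≠ 0` and `supp(P) ⊆ im(Φ)`. -/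
theorem stmt_7 (q : ℕ) (K : Type) [Field K] [Fintype K] [DecidableEq K]
    (hq : Fintype.card K = q)
    (d m n : ℕ) (hd : 0 < d) (hm : 0 < m) (hn : 0 < n)
    (φ : Fin n → MvPolynomial (Fin m) K)
    (hφ : ∀ i, (φ i).totalDegree ≤ d)
    (μ : MvPolynomial (Fin m) K)
    (hμ : ∑ a ∈ Finset.univ.filter
        (fun a : Fin m → K => (fun i => MvPolynomial.eval a (φ i)) = (0 : Fin n → K)),
      MvPolynomial.eval a μ ≠ 0) :
    ∃ P : MvPolynomial (Fin n) K,
      (P.totalDegree : ℝ) ≤ ((q : ℝ) - 1) * ((n : ℝ) - (m : ℝ) / (d : ℝ)) +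
        (μ.totalDegree : ℝ) / (d : ℝ) ∧
      MvPolynomial.eval (0 : Fin n → K) P ≠ 0 ∧
      ∀ x : Fin n → K, MvPolynomial.eval x P ≠ 0 →
        ∃ a : Fin m → K, (fun i => MvPolynomial.eval a (φ i)) = x := by
  classical
  have hq2 : 2 ≤ q := by
    rw [← hq]; exact Fintype.one_lt_card
  set T : MvPolynomial (Fin n) (MvPolynomial (Fin m) K) :=
    C μ * ∏ i, (1 - (X i - C (φ i)) ^ (q - 1)) with hT
  set Q : MvPolynomial (Fin n) K :=
    ∑ a : Fin m → K, MvPolynomial.map (eval a) T with hQdef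
  -- evaluation formula
  have hev : ∀ x : Fin n → K, eval x Q = ∑ a ∈ Finset.univ.filter
      (fun a : Fin m → K => (fun i => eval a (φ i)) = x), eval a μ := by
    intro x
    rw [hQdef, map_sum, Finset.sum_filter]
    refine Finset.sum_congr rfl fun a _ => ?_
    rw [eval_map]
    have : eval₂ (eval a) x T = (eval₂Hom (eval a) x) T := rfl
    rw [this, hT, map_mul, map_prod]
    simp only [map_sub, map_one, map_pow, eval₂Hom_X', eval₂Hom_C]
    have hind : ∀ i : Fin n, (1 - (x i - eval a (φ i)) ^ (q - 1) : K)
        = if eval a (φ i) = x i then 1 else 0 := by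
      intro i
      rcases eq_or_ne (eval a (φ i)) (x i) with h | h
      · rw [if_pos h, h, sub_self, zero_pow (by omega : q - 1 ≠ 0), sub_zero]
      · have hne : (x i - eval a (φ i)) ≠ 0 := sub_ne_zero.2 (Ne.symm h)
        have := FiniteField.pow_card_sub_one_eq_one _ hne
        rw [hq] at this
        rw [if_neg h, this, sub_self]
    simp only [hind]
    rw [Fintype.prod_boole]
    by_cases hax : (fun i => eval a (φ i)) = x
    · rw [if_pos (fun i => congrFun hax i), if_pos hax, mul_one]
    · rw [if_neg (fun hall => hax (funext hall)), if_neg hax, mul_zero]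
  have hQ0 : eval (0 : Fin n → K) Q ≠ 0 := by rw [hev 0]; exact hμ
  have hQne : Q ≠ 0 := fun h => hQ0 (by rw [h, map_zero])
  -- degree bound predicate
  have hDB : CLP7.DB d T (μ.totalDegree + n * (d * (q - 1))) := by
    rw [hT]
    have h2 : ∀ i : Fin n, CLP7.DB d (1 - (X i - C (φ i)) ^ (q - 1)) (d * (q - 1)) := by
      intro i
      refine CLP7.db_sub (CLP7.db_mono CLP7.db_one (Nat.zero_le _)) ?_
      have hXC : CLP7.DB d (X i - C (φ i)) d :=
        CLP7.db_sub (CLP7.db_X i) (CLP7.db_mono (CLP7.db_C (φ i)) (hφ i))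
      exact CLP7.db_mono (CLP7.db_pow hXC (q - 1)) (by rw [Nat.mul_comm])
    have h3 := CLP7.db_prod Finset.univ (fun i => (1 - (X i - C (φ i)) ^ (q - 1)))
      (d * (q - 1)) (fun i _ => h2 i)
    simpa using CLP7.db_mul (CLP7.db_C μ) h3
  -- key inequality for monomials of Q
  have key : ∀ α ∈ Q.support,
      (q - 1) * m + d * (α.sum fun _ e => e) ≤ μ.totalDegree + n * (d * (q - 1)) := by
    intro α hα
    have hαQ : coeff α Q ≠ 0 := mem_support_iff.1 hα
    have hcoeff : coeff α Q = ∑ a : Fin m → K, eval a (coeff α T) := by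
      rw [hQdef, MvPolynomial.coeff_sum]
      exact Finset.sum_congr rfl fun a _ => MvPolynomial.coeff_map _ _ _
    have hTα : coeff α T ≠ 0 := by
      intro h
      apply hαQ
      rw [hcoeff, h]
      simp
    have hg : (q - 1) * m ≤ (coeff α T).totalDegree := by
      by_contra h
      push_neg at h
      have hz := MvPolynomial.sum_eval_eq_zero (coeff α T) (by rw [hq]; simpa using h)
      exact hαQ (by rw [hcoeff, hz])
    have := hDB α hTα
    omega
  refine ⟨Q, ?_, hQ0, ?_⟩
  · obtain ⟨α, hαs, hαd⟩ := Finset.exists_mem_eq_sup Q.support (support_nonempty.2 hQne)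
      (fun α => α.sum fun _ e => e)
    set S : ℕ := α.sum fun _ e => e with hS
    rw [show Q.totalDegree = S from hαd]
    have hk := key α hαs
    rw [← hS] at hk
    have hdR : (0 : ℝ) < d := by exact_mod_cast hd
    have hkR : ((q : ℝ) - 1) * m + d * (S : ℝ)
        ≤ (μ.totalDegree : ℝ) + n * (d * ((q : ℝ) - 1)) := by
      have := (Nat.cast_le (α := ℝ)).2 hk
      push_cast [Nat.cast_sub (show 1 ≤ q by omega)] at this
      linarith
    rw [show ((q : ℝ) - 1) * ((n : ℝ) - (m : ℝ) / d) + (μ.totalDegree : ℝ) / d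
        = (((q : ℝ) - 1) * ((n : ℝ) * d - m) + μ.totalDegree) / d by field_simp,
      le_div_iff₀ hdR]
    nlinarith [hkR]
  · intro x hx
    rw [hev x] at hx
    obtain ⟨a, ha, _⟩ := Finset.exists_ne_zero_of_sum_ne_zero hx
    exact ⟨a, (Finset.mem_filter.1 ha).2⟩
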